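/- Let n, N ≥ 1, let λ_1,…,λ_n ≥ 0 with Σ_k λ_k = 1, let ρ := diag(λ_1,…,λ_n) (a possibly non-faithful diagonal density matrix), let A_1,…,A_N be Hermitian n×n complex matrices, and let m : [0,∞)×[0,∞) → ℝ satisfy 0 ≤ m(x,y) ≤ (x+y)/2 for all x,y ≥ 0. Then det G(m) ≤ det Cov, i.e. det{ Cov_{hj} − Σ_{k,l} m(λ_k,λ_l)·Re( ((A_h)₀)_{kl}·conj(((A_j)₀)_{kl}) ) } ≤ det{ Cov_{hj} }. -/

import Mathlib

open Matrix

/-- Determinant of a real PSD matrix is nonnegative. -/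
private lemma psd_det_nonneg {n : Type*} [Fintype n] [DecidableEq n]
    {M : Matrix n n ℝ} (hM : M.PosSemidef) : 0 ≤ M.det := by
  rw [hM.isHermitian.det_eq_prod_eigenvalues]
  exact Finset.prod_nonneg fun i _ => by simpa using hM.eigenvalues_nonneg i

/-- If `C` and `1 - C` are PSD then `det C ≤ 1`. -/
private lemma psd_det_le_one {n : Type*} [Fintype n] [DecidableEq n]
    {C : Matrix n n ℝ} (hC : C.PosSemidef) (h1 : (1 - C).PosSemidef) : C.det ≤ 1 := by
  rw [hC.isHermitian.det_eq_prod_eigenvalues]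
  have hle : ∀ i, hC.isHermitian.eigenvalues i ≤ 1 := by
    intro i
    set μ : ℝ := hC.isHermitian.eigenvalues i with hμ
    set v : n → ℝ := ⇑(hC.isHermitian.eigenvectorBasis i) with hv
    have hvne : v ≠ 0 := by
      intro h0
      exact hC.isHermitian.eigenvectorBasis.orthonormal.ne_zero i (by ext j; exact congrFun h0 j)
    have hmv : C *ᵥ v = μ • v := hC.isHermitian.mulVec_eigenvectorBasis i
    have key := h1.dotProduct_mulVec_nonneg v
    have hsx : star v = v := funext fun _ => star_trivial _
    rw [hsx, sub_mulVec, one_mulVec, hmv, dotProduct_sub, dotProduct_smul, smul_eq_mul] at key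
    have hpos : 0 < v ⬝ᵥ v := by
      rcases lt_or_eq_of_le (by simpa [hsx] using dotProduct_star_self_nonneg v) with h | h
      · exact h
      · exact absurd (dotProduct_self_eq_zero.mp h.symm) hvne
    nlinarith
  refine Finset.prod_le_one (fun i _ => by simpa using hC.eigenvalues_nonneg i) ?_
  intro i _
  simpa using hle i

open scoped MatrixOrder in
/-- Determinant monotonicity: `det A ≤ det (A + B)` for real PSD `A`, `B`. -/
private lemma psd_det_le_det_add {n : Type*} [Fintype n] [DecidableEq n]
    {A B : Matrix n n ℝ} (hA : A.PosSemidef) (hB : B.PosSemidef) :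
    A.det ≤ (A + B).det := by
  by_cases hd : (A + B).det = 0
  · obtain ⟨v, hv, hv0⟩ := Matrix.exists_mulVec_eq_zero_iff.mpr hd
    have h0 : star v ⬝ᵥ (A + B) *ᵥ v = 0 := by rw [hv0, dotProduct_zero]
    rw [add_mulVec, dotProduct_add] at h0
    have hA0 : star v ⬝ᵥ A *ᵥ v = 0 := by
      have h1 := hA.dotProduct_mulVec_nonneg v
      have h2 := hB.dotProduct_mulVec_nonneg v
      linarith
    have hAv : A *ᵥ v = 0 := (hA.dotProduct_mulVec_zero_iff v).1 hA0
    have : A.det = 0 := Matrix.exists_mulVec_eq_zero_iff.mp ⟨v, hv, hAv⟩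
    rw [this, hd]
  · set S := CFC.sqrt (A + B) with hSdef
    have hSpsd : S.PosSemidef := (CFC.sqrt_nonneg (A + B)).posSemidef
    have hS : S * S = A + B := CFC.sqrt_mul_sqrt_self (A + B) (hA.add hB).nonneg
    have hSdet : S.det ≠ 0 := by
      intro h; exact hd (by rw [← hS, det_mul, h, mul_zero])
    have hu : IsUnit S.det := isUnit_iff_ne_zero.mpr hSdet
    have hSinvH : (S⁻¹)ᴴ = S⁻¹ := by
      rw [Matrix.conjTranspose_nonsing_inv, hSpsd.isHermitian]
    set C : Matrix n n ℝ := S⁻¹ * A * S⁻¹ with hCdef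
    have hCpsd : C.PosSemidef := by
      have := hA.conjTranspose_mul_mul_same (B := S⁻¹)
      rwa [hSinvH] at this
    have hid : S⁻¹ * (A + B) * S⁻¹ = 1 := by
      rw [← hS, ← mul_assoc, Matrix.nonsing_inv_mul S hu, one_mul, Matrix.mul_nonsing_inv S hu]
    have h1C : 1 - C = S⁻¹ * B * S⁻¹ := by
      rw [← hid, hCdef, Matrix.mul_add, Matrix.add_mul]
      abel
    have h1psd : (1 - C).PosSemidef := by
      rw [h1C]
      have := hB.conjTranspose_mul_mul_same (B := S⁻¹)
      rwa [hSinvH] at this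
    have hAC : A = S * C * S := by
      rw [hCdef, ← mul_assoc, ← mul_assoc, Matrix.mul_nonsing_inv S hu, one_mul,
        mul_assoc, Matrix.nonsing_inv_mul S hu, mul_one]
    have hdetAB : (A + B).det = S.det * S.det := by rw [← hS, det_mul]
    calc A.det = S.det * C.det * S.det := by rw [hAC, det_mul, det_mul]
    _ = (A + B).det * C.det := by rw [hdetAB]; ring
    _ ≤ (A + B).det * 1 := by
        refine mul_le_mul_of_nonneg_left (psd_det_le_one hCpsd h1psd) ?_
        exact psd_det_nonneg (hA.add hB)
    _ = (A + B).det := mul_one _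

private lemma sum4_comm {N n : ℕ} (f : Fin N → Fin N → Fin n → Fin n → ℝ) :
    ∑ h, ∑ j, ∑ k, ∑ l, f h j k l = ∑ k, ∑ l, ∑ h, ∑ j, f h j k l := by
  calc ∑ h, ∑ j, ∑ k, ∑ l, f h j k l
      = ∑ h, ∑ k, ∑ j, ∑ l, f h j k l :=
        Finset.sum_congr rfl fun h _ => Finset.sum_comm
    _ = ∑ k, ∑ h, ∑ j, ∑ l, f h j k l := Finset.sum_comm
    _ = ∑ k, ∑ h, ∑ l, ∑ j, f h j k l :=
        Finset.sum_congr rfl fun k _ => Finset.sum_congr rfl fun h _ => Finset.sum_comm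
    _ = ∑ k, ∑ l, ∑ h, ∑ j, f h j k l :=
        Finset.sum_congr rfl fun k _ => Finset.sum_comm

private lemma sum_re_nonneg {N : ℕ} (x : Fin N → ℝ) (z : Fin N → ℂ) :
    0 ≤ ∑ h, ∑ j, x h * x j * (z h * (starRingEnd ℂ) (z j)).re := by
  have key : ∑ h, ∑ j, x h * x j * (z h * (starRingEnd ℂ) (z j)).re
      = ((∑ h, (x h : ℂ) * z h) * (starRingEnd ℂ) (∑ j, (x j : ℂ) * z j)).re := by
    rw [map_sum, Finset.sum_mul, Complex.re_sum]
    refine Finset.sum_congr rfl fun h _ => ?_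
    rw [Finset.mul_sum, Complex.re_sum]
    refine Finset.sum_congr rfl fun j _ => ?_
    have : (x h : ℂ) * z h * (starRingEnd ℂ) ((x j : ℂ) * z j)
        = ((x h * x j : ℝ) : ℂ) * (z h * (starRingEnd ℂ) (z j)) := by
      rw [_root_.map_mul, Complex.conj_ofReal]
      push_cast
      ring
    rw [this, Complex.re_ofReal_mul]
  rw [key, Complex.mul_conj]
  simpa using Complex.normSq_nonneg _

/-- A matrix of the form `M h j = ∑ k l, w k l * Re (z h k l * conj (z j k l))`
with nonnegative weights `w` is positive semidefinite. -/
private lemma posSemidef_weighted {N n : ℕ} (w : Fin n → Fin n → ℝ) (hw : ∀ k l, 0 ≤ w k l)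
    (z : Fin N → Fin n → Fin n → ℂ) (M : Matrix (Fin N) (Fin N) ℝ)
    (hM : ∀ h j, M h j = ∑ k, ∑ l, w k l * (z h k l * (starRingEnd ℂ) (z j k l)).re) :
    M.PosSemidef := by
  have hre : ∀ a b : ℂ, (a * (starRingEnd ℂ) b).re = (b * (starRingEnd ℂ) a).re := by
    intro a b
    rw [← Complex.conj_re (a * (starRingEnd ℂ) b), _root_.map_mul, Complex.conj_conj, mul_comm]
  refine Matrix.PosSemidef.of_dotProduct_mulVec_nonneg ?_ ?_
  · ext h j
    rw [conjTranspose_apply, star_trivial, hM, hM]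
    exact Finset.sum_congr rfl fun k _ => Finset.sum_congr rfl fun l _ => by rw [hre]
  · intro x
    have hsx : star x = x := funext fun _ => star_trivial _
    rw [hsx]
    have expand : x ⬝ᵥ M *ᵥ x
        = ∑ k, ∑ l, w k l * ∑ h, ∑ j, x h * x j * (z h k l * (starRingEnd ℂ) (z j k l)).re := by
      calc x ⬝ᵥ M *ᵥ x
          = ∑ h, ∑ j, ∑ k, ∑ l,
            x h * x j * (w k l * (z h k l * (starRingEnd ℂ) (z j k l)).re) := by
            simp only [dotProduct, mulVec, hM, Finset.sum_mul, Finset.mul_sum]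
            exact Finset.sum_congr rfl fun h _ => Finset.sum_congr rfl fun j _ =>
              Finset.sum_congr rfl fun k _ => Finset.sum_congr rfl fun l _ => by ring
        _ = ∑ k, ∑ l, ∑ h, ∑ j,
            x h * x j * (w k l * (z h k l * (starRingEnd ℂ) (z j k l)).re) := sum4_comm _
        _ = ∑ k, ∑ l, w k l * ∑ h, ∑ j,
            x h * x j * (z h k l * (starRingEnd ℂ) (z j k l)).re := by
            refine Finset.sum_congr rfl fun k _ => Finset.sum_congr rfl fun l _ => ?_
            rw [Finset.mul_sum]
            refine Finset.sum_congr rfl fun h _ => ?_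
            rw [Finset.mul_sum]
            exact Finset.sum_congr rfl fun j _ => by ring
    rw [expand]
    refine Finset.sum_nonneg fun k _ => Finset.sum_nonneg fun l _ => ?_
    exact mul_nonneg (hw k l) (sum_re_nonneg x fun h => z h k l)

/-- The uncertainty-principle inequality `det G(m) ≤ det Cov` for a possibly
non-faithful diagonal density matrix (eigenvalues only nonnegative), with
`0 ≤ m(x,y) ≤ (x+y)/2` for all `x, y ≥ 0`. -/
theorem det_fisher_le_det_cov_nonfaithful
    (n N : ℕ) (hn : 1 ≤ n) (hN : 1 ≤ N)
    (lam : Fin n → ℝ) (hpos : ∀ k, 0 ≤ lam k) (hsum : ∑ k, lam k = 1)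
    (A : Fin N → Matrix (Fin n) (Fin n) ℂ) (hA : ∀ h, (A h).IsHermitian)
    (m : ℝ → ℝ → ℝ)
    (hm : ∀ x y : ℝ, 0 ≤ x → 0 ≤ y → 0 ≤ m x y ∧ m x y ≤ (x + y) / 2)
    (ρ : Matrix (Fin n) (Fin n) ℂ)
    (hρ : ρ = Matrix.diagonal fun k => (lam k : ℂ))
    (A₀ : Fin N → Matrix (Fin n) (Fin n) ℂ)
    (hA₀ : ∀ h, A₀ h = A h - (Matrix.trace (ρ * A h)) • (1 : Matrix (Fin n) (Fin n) ℂ))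
    (Cov : Matrix (Fin N) (Fin N) ℝ)
    (hCov : ∀ h j, Cov h j = (Matrix.trace (ρ * A₀ h * A₀ j)).re)
    (G : Matrix (Fin N) (Fin N) ℝ)
    (hG : ∀ h j, G h j = Cov h j -
      ∑ k, ∑ l, m (lam k) (lam l) * (A₀ h k l * (starRingEnd ℂ) (A₀ j k l)).re) :
    G.det ≤ Cov.det := by
  -- `ρ` is Hermitian
  have hρH : ρ.IsHermitian := by
    rw [hρ]
    refine Matrix.isHermitian_diagonal_iff.mpr fun k => ?_
    exact Complex.conj_ofReal (lam k)
  -- `Tr (ρ * A h)` is self-adjoint (real)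
  have hc : ∀ h, star (Matrix.trace (ρ * A h)) = Matrix.trace (ρ * A h) := by
    intro h
    rw [← Matrix.trace_conjTranspose, Matrix.conjTranspose_mul, (hA h).eq, hρH.eq,
      Matrix.trace_mul_comm]
  -- each `A₀ h` is Hermitian
  have hH0 : ∀ h, (A₀ h).IsHermitian := by
    intro h
    rw [hA₀ h]
    refine (hA h).sub ?_
    rw [Matrix.IsHermitian, Matrix.conjTranspose_smul, Matrix.conjTranspose_one, hc h]
  have herm : ∀ j k l, A₀ j l k = (starRingEnd ℂ) (A₀ j k l) := by
    intro j k l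
    have h1 := congrFun (congrFun (hH0 j).eq l) k
    rw [Matrix.conjTranspose_apply] at h1
    rw [← h1]
    rfl
  -- abbreviation for the real bilinear terms
  -- entrywise k-l symmetry
  have hswap : ∀ h j k l, (A₀ h l k * (starRingEnd ℂ) (A₀ j l k)).re
      = (A₀ h k l * (starRingEnd ℂ) (A₀ j k l)).re := by
    intro h j k l
    rw [herm h k l, herm j k l, Complex.conj_conj]
    rw [show (starRingEnd ℂ) (A₀ h k l) * A₀ j k l
        = (starRingEnd ℂ) (A₀ h k l * (starRingEnd ℂ) (A₀ j k l)) by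
      rw [_root_.map_mul, Complex.conj_conj]]
    rw [Complex.conj_re]
  -- expand the trace
  have htr : ∀ h j, Cov h j
      = ∑ k, ∑ l, lam k * (A₀ h k l * (starRingEnd ℂ) (A₀ j k l)).re := by
    intro h j
    rw [hCov h j]
    have htrace : Matrix.trace (ρ * A₀ h * A₀ j)
        = ∑ k, ∑ l, ((lam k : ℂ)) * (A₀ h k l * (starRingEnd ℂ) (A₀ j k l)) := by
      rw [Matrix.trace]
      refine Finset.sum_congr rfl fun k _ => ?_
      rw [Matrix.diag_apply, Matrix.mul_apply]
      refine Finset.sum_congr rfl fun l _ => ?_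
      rw [hρ, Matrix.diagonal_mul, herm j k l, mul_assoc]
    rw [htrace, Complex.re_sum]
    refine Finset.sum_congr rfl fun k _ => ?_
    rw [Complex.re_sum]
    exact Finset.sum_congr rfl fun l _ => Complex.re_ofReal_mul _ _
  -- symmetrized form of Cov
  have hCov2 : ∀ h j, Cov h j
      = ∑ k, ∑ l, ((lam k + lam l) / 2) * (A₀ h k l * (starRingEnd ℂ) (A₀ j k l)).re := by
    intro h j
    have e2 : Cov h j = ∑ k, ∑ l, lam l * (A₀ h k l * (starRingEnd ℂ) (A₀ j k l)).re := by
      rw [htr h j, Finset.sum_comm]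
      exact Finset.sum_congr rfl fun k _ => Finset.sum_congr rfl fun l _ => by
        rw [hswap h j k l]
    have e3 : Cov h j = ((∑ k, ∑ l, lam k * (A₀ h k l * (starRingEnd ℂ) (A₀ j k l)).re)
        + ∑ k, ∑ l, lam l * (A₀ h k l * (starRingEnd ℂ) (A₀ j k l)).re) / 2 := by
      rw [← htr h j, ← e2]; ring
    rw [e3, ← Finset.sum_add_distrib, Finset.sum_div]
    refine Finset.sum_congr rfl fun k _ => ?_
    rw [← Finset.sum_add_distrib, Finset.sum_div]
    exact Finset.sum_congr rfl fun l _ => by ring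
  -- G in weighted form
  have hG2 : ∀ h j, G h j = ∑ k, ∑ l, ((lam k + lam l) / 2 - m (lam k) (lam l))
      * (A₀ h k l * (starRingEnd ℂ) (A₀ j k l)).re := by
    intro h j
    rw [hG h j, hCov2 h j, ← Finset.sum_sub_distrib]
    refine Finset.sum_congr rfl fun k _ => ?_
    rw [← Finset.sum_sub_distrib]
    exact Finset.sum_congr rfl fun l _ => by ring
  -- Cov - G in weighted form
  have hD2 : ∀ h j, (Cov - G) h j = ∑ k, ∑ l, m (lam k) (lam l)
      * (A₀ h k l * (starRingEnd ℂ) (A₀ j k l)).re := by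
    intro h j
    rw [Matrix.sub_apply, hG h j]
    ring
  -- positive semidefiniteness
  have hGpsd : G.PosSemidef := by
    refine posSemidef_weighted _ (fun k l => ?_) (fun h => A₀ h) G hG2
    have := hm (lam k) (lam l) (hpos k) (hpos l)
    linarith [this.2]
  have hDpsd : (Cov - G).PosSemidef := by
    refine posSemidef_weighted _ (fun k l => ?_) (fun h => A₀ h) (Cov - G) hD2
    exact (hm (lam k) (lam l) (hpos k) (hpos l)).1
  have := psd_det_le_det_add hGpsd hDpsd
  rwa [show G + (Cov - G) = Cov by abel] at this
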